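/- The matrices of the form [[α,β],[β',α']] with α, β ∈ T(p,q), αβ* a vector in R^{p,q}, and α ᾱ − β β̄ = ±1, are closed under matrix multiplication and form a group S_{pq}. -/

import Mathlib

noncomputable section
open CliffordAlgebra

def sw (p q : ℕ) : Fin (p + q) → ℝ := fun i => if (i : ℕ) < p then 1 else -1

def Qpq (p q : ℕ) : QuadraticForm ℝ (Fin (p + q) → ℝ) :=
  QuadraticMap.weightedSumSquares ℝ (sw p q)

def Bpq (p q : ℕ) (x y : Fin (p + q) → ℝ) : ℝ :=
  -∑ i, sw p q i * x i * y i

abbrev Cl (p q : ℕ) := CliffordAlgebra (Qpq p q)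

def clConj {p q : ℕ} (x : Cl p q) : Cl p q := reverse (involute x)

def IsVec {p q : ℕ} (x : Cl p q) : Prop := ∃ v, x = ι (Qpq p q) v

def Tset (p q : ℕ) : Set (Cl p q) :=
  {x | ∃ l : List (Fin (p + q) → ℝ), x = (l.map (ι (Qpq p q))).prod}

def Gamma (p q : ℕ) : Set (Cl p q) :=
  {x | ∃ l : List (Fin (p + q) → ℝ), (∀ v ∈ l, Bpq p q v v ≠ 0) ∧
        x = (l.map (ι (Qpq p q))).prod}

def Pin (p q : ℕ) : Set (Cl p q) :=
  {a | a ∈ Gamma p q ∧ (a * clConj a = 1 ∨ a * clConj a = -1)}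

def mobius {p q : ℕ} (M : Matrix (Fin 2) (Fin 2) (Cl p q)) (x : Fin (p + q) → ℝ) : Cl p q :=
  (M 0 0 * ι (Qpq p q) x + M 0 1) * Ring.inverse (M 1 0 * ι (Qpq p q) x + M 1 1)

def InS (p q : ℕ) (M : Matrix (Fin 2) (Fin 2) (Cl p q)) : Prop :=
  ∃ α β : Cl p q, α ∈ Tset p q ∧ β ∈ Tset p q ∧ IsVec (α * reverse β) ∧
    (α * clConj α - β * clConj β = 1 ∨ α * clConj α - β * clConj β = -1) ∧
    M = !![α, β; involute β, involute α]

namespace S13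

variable {p q : ℕ}

local notation "V" => Fin (p + q) → ℝ
local notation "jj" => ι (Qpq p q)
local notation "alg" => algebraMap ℝ (Cl p q)

/-- product of a list of vectors -/
def P (l : List (Fin (p + q) → ℝ)) : Cl p q := (l.map jj).prod

@[simp] lemma P_nil : P ([] : List (Fin (p+q) → ℝ)) = 1 := rfl

@[simp] lemma P_cons (v : V) (l : List (Fin (p+q) → ℝ)) : P (v :: l) = jj v * P l := by
  simp [P]

lemma P_append (l k : List (Fin (p+q) → ℝ)) : P (l ++ k) = P l * P k := by
  simp [P]

lemma mem_T (x : Cl p q) : x ∈ Tset p q ↔ ∃ l : List (Fin (p+q) → ℝ), x = P l := Iff.rfl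

-- clConj basic lemmas
lemma clConj_mul (x y : Cl p q) : clConj (x * y) = clConj y * clConj x := by
  simp [clConj, map_mul]

@[simp] lemma clConj_one : clConj (1 : Cl p q) = 1 := by simp [clConj]

@[simp] lemma clConj_ι (v : V) : clConj (jj v) = - jj v := by
  simp [clConj]

@[simp] lemma clConj_algebraMap (r : ℝ) : clConj (alg r) = alg r := by
  simp [clConj]

@[simp] lemma clConj_clConj (x : Cl p q) : clConj (clConj x) = x := by
  simp [clConj, ← reverse_involute, reverse_reverse]

lemma clConj_add (x y : Cl p q) : clConj (x + y) = clConj x + clConj y := by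
  simp [clConj, map_add]

lemma clConj_smul (r : ℝ) (x : Cl p q) : clConj (r • x) = r • clConj x := by
  simp [clConj, map_smul]

lemma involute_P (l : List (Fin (p+q) → ℝ)) : involute (P l) = P (l.map (fun v => -v)) := by
  induction l with
  | nil => simp
  | cons v t ih => simp [map_mul, ih]

lemma reverse_P (l : List (Fin (p+q) → ℝ)) : reverse (P l) = P l.reverse := by
  induction l with
  | nil => simp
  | cons v t ih => simp [map_mul, ih, P_append]

lemma clConj_P (l : List (Fin (p+q) → ℝ)) : clConj (P l) = P ((l.map (fun v => -v)).reverse) := by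
  rw [clConj, involute_P, reverse_P]

lemma P_map_neg (l : List (Fin (p+q) → ℝ)) :
    P (l.map (fun v => -v)) = ((-1 : ℝ) ^ l.length) • P l := by
  induction l with
  | nil => simp
  | cons v t ih =>
    simp only [List.map_cons, P_cons, ih, List.length_cons, map_neg]
    rw [pow_succ, mul_smul_comm, neg_mul, ← neg_one_smul ℝ (jj v * P t), smul_smul]

/-- scalar invariant of a list -/
def nu (l : List (Fin (p + q) → ℝ)) : ℝ := (l.map (fun v => -(Qpq p q v))).prod

@[simp] lemma nu_nil : nu ([] : List (Fin (p+q) → ℝ)) = 1 := rfl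

@[simp] lemma nu_cons (v : V) (t : List (Fin (p+q) → ℝ)) :
    nu (v :: t) = -(Qpq p q v) * nu t := by simp [nu]

lemma nu_append (l k : List (Fin (p+q) → ℝ)) : nu (l ++ k) = nu l * nu k := by
  simp [nu]

lemma Qpq_neg (v : V) : Qpq p q (-v) = Qpq p q v := by
  rw [show (-v) = (-1 : ℝ) • v by simp, QuadraticMap.map_smul]; norm_num

lemma nu_map_neg (l : List (Fin (p+q) → ℝ)) : nu (l.map (fun v => -v)) = nu l := by
  induction l with
  | nil => simp
  | cons v t ih => simp [ih, Qpq_neg]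

lemma P_mul_clConj (l : List (Fin (p+q) → ℝ)) : P l * clConj (P l) = alg (nu l) := by
  induction l with
  | nil => simp
  | cons v t ih =>
    rw [P_cons, clConj_mul, clConj_ι, nu_cons, map_mul]
    calc jj v * P t * (clConj (P t) * -jj v) = jj v * (P t * clConj (P t)) * -jj v := by noncomm_ring
    _ = jj v * alg (nu t) * -jj v := by rw [ih]
    _ = (alg (nu t)) * (jj v * -jj v) := by
        rw [← Algebra.commutes (nu t) (jj v), mul_assoc]
    _ = alg (nu t) * alg (-(Qpq p q v)) := by
        rw [mul_neg, ι_sq_scalar, ← map_neg]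
    _ = alg (-(Qpq p q v)) * alg (nu t) := by rw [← map_mul, ← map_mul, mul_comm]

lemma clConj_mul_P (l : List (Fin (p+q) → ℝ)) : clConj (P l) * P l = alg (nu l) := by
  induction l with
  | nil => simp
  | cons v t ih =>
    rw [P_cons, clConj_mul, clConj_ι, nu_cons, map_mul]
    calc clConj (P t) * -jj v * (jj v * P t) = clConj (P t) * (-(jj v * jj v)) * P t := by noncomm_ring
    _ = clConj (P t) * (alg (-(Qpq p q v))) * P t := by rw [ι_sq_scalar, ← map_neg]
    _ = alg (-(Qpq p q v)) * (clConj (P t) * P t) := by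
        rw [← Algebra.commutes (-(Qpq p q v)) (clConj (P t))]; noncomm_ring
    _ = alg (-(Qpq p q v)) * alg (nu t) := by rw [ih]

/-- sandwiching a vector between a product and its reverse yields a vector -/
lemma sandwich (l : List (Fin (p+q) → ℝ)) (x : V) :
    ∃ y : V, P l.reverse * jj x * P l = jj y := by
  induction l generalizing x with
  | nil => exact ⟨x, by simp⟩
  | cons v t ih =>
    have h1 : P (v :: t).reverse = P t.reverse * jj v := by
      simp [List.reverse_cons, P_append]
    have hvxv : jj v * jj x * jj v = jj (QuadraticMap.polar (Qpq p q) v x • v - Qpq p q v • x) := by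
      rw [ι_mul_ι_comm, sub_mul, mul_assoc, ι_sq_scalar, map_sub, map_smul, map_smul,
        ← Algebra.commutes ((Qpq p q) v) (jj x), ← Algebra.smul_def, ← Algebra.smul_def]
    obtain ⟨y, hy⟩ := ih (QuadraticMap.polar (Qpq p q) v x • v - Qpq p q v • x)
    refine ⟨y, ?_⟩
    rw [h1, P_cons]
    calc P t.reverse * jj v * jj x * (jj v * P t)
        = P t.reverse * (jj v * jj x * jj v) * P t := by noncomm_ring
    _ = P t.reverse * jj (QuadraticMap.polar (Qpq p q) v x • v - Qpq p q v • x) * P t := by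
        rw [hvxv]
    _ = jj y := hy

lemma sandwich' (l : List (Fin (p+q) → ℝ)) (x : V) :
    ∃ y : V, P l * jj x * P l.reverse = jj y := by
  simpa using sandwich l.reverse x

end S13

namespace S13

variable {p q : ℕ}

lemma alg_inj : Function.Injective (algebraMap ℝ (Cl p q)) := RingHom.injective _

lemma Qpq_apply (v : Fin (p+q) → ℝ) : Qpq p q v = ∑ i, sw p q i * (v i * v i) := by
  rw [Qpq, QuadraticMap.weightedSumSquares_apply]
  simp [smul_eq_mul]

lemma sw_sq (i : Fin (p+q)) : sw p q i * sw p q i = 1 := by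
  unfold sw; split_ifs <;> norm_num

lemma polar_Qpq (u v : Fin (p+q) → ℝ) :
    QuadraticMap.polar (Qpq p q) u v = ∑ i, 2 * sw p q i * (u i * v i) := by
  rw [QuadraticMap.polar, Qpq_apply, Qpq_apply, Qpq_apply, ← Finset.sum_sub_distrib,
    ← Finset.sum_sub_distrib]
  refine Finset.sum_congr rfl fun i _ => ?_
  simp only [Pi.add_apply]
  ring

lemma Qpq_add (u v : Fin (p+q) → ℝ) :
    Qpq p q (u + v) = Qpq p q u + Qpq p q v + QuadraticMap.polar (Qpq p q) u v := by
  rw [QuadraticMap.polar]; ring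

lemma Qpq_sub (u v : Fin (p+q) → ℝ) :
    Qpq p q (u - v) = Qpq p q u + Qpq p q v - QuadraticMap.polar (Qpq p q) u v := by
  have h := Qpq_add u (-v)
  rw [QuadraticMap.polar_neg_right, Qpq_neg] at h
  rw [sub_eq_add_neg, h]; ring

/-- Euclidean pairing helper -/
def Ee (u v : Fin (p+q) → ℝ) : ℝ := ∑ i, u i * v i

lemma Ee_self_eq_zero {v : Fin (p+q) → ℝ} (h : Ee v v = 0) : v = 0 := by
  funext i
  have h1 : ∀ j ∈ Finset.univ, (0:ℝ) ≤ v j * v j := fun j _ => mul_self_nonneg _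
  have := (Finset.sum_eq_zero_iff_of_nonneg h1).mp h i (Finset.mem_univ i)
  simpa [mul_self_eq_zero] using this

lemma polar_dual (u w1 w2 : Fin (p+q) → ℝ) (a b : ℝ) :
    QuadraticMap.polar (Qpq p q) u (fun i => sw p q i * (a * w1 i + b * w2 i)) =
      2 * a * Ee u w1 + 2 * b * Ee u w2 := by
  rw [polar_Qpq]
  have step : ∀ i ∈ Finset.univ, 2 * sw p q i * (u i * (sw p q i * (a * w1 i + b * w2 i)))
      = 2 * a * (u i * w1 i) + 2 * b * (u i * w2 i) := by
    intro i _
    have hsw := sw_sq (p := p) (q := q) i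
    linear_combination (2 * u i * (a * w1 i + b * w2 i)) * hsw
  rw [Finset.sum_congr rfl step, Finset.sum_add_distrib, ← Finset.mul_sum, ← Finset.mul_sum]
  rfl

lemma Ee_comm (u v : Fin (p+q) → ℝ) : Ee u v = Ee v u := by
  unfold Ee; exact Finset.sum_congr rfl fun i _ => mul_comm _ _

lemma Ee_sub_smul (x y : Fin (p+q) → ℝ) (c : ℝ) (w : Fin (p+q) → ℝ) :
    Ee x (y - c • w) = Ee x y - c * Ee x w := by
  unfold Ee
  rw [Finset.mul_sum, ← Finset.sum_sub_distrib]
  refine Finset.sum_congr rfl fun i _ => ?_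
  simp only [Pi.sub_apply, Pi.smul_apply, smul_eq_mul]
  ring

lemma exists_dual {u m : Fin (p+q) → ℝ}
    (hQu : Qpq p q u = 0) (hpol : QuadraticMap.polar (Qpq p q) u m = 0)
    (h1 : ¬ ∃ t : ℝ, m = t • u) (h2 : ¬ ∃ t : ℝ, u = t • m) :
    ∃ z : Fin (p+q) → ℝ, Qpq p q z = 1 ∧ QuadraticMap.polar (Qpq p q) u z = 1 ∧
      QuadraticMap.polar (Qpq p q) m z = 1 := by
  have hu0 : u ≠ 0 := by
    rintro rfl; exact h2 ⟨0, by simp⟩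
  have hEuu : Ee u u ≠ 0 := fun h => hu0 (Ee_self_eq_zero h)
  set m' : Fin (p+q) → ℝ := m - (Ee u m / Ee u u) • u with hm'
  have hm'0 : m' ≠ 0 := by
    intro h
    refine h1 ⟨Ee u m / Ee u u, ?_⟩
    have := sub_eq_zero.mp h
    exact this
  have hEum' : Ee u m' = 0 := by
    rw [hm', Ee_sub_smul, div_mul_cancel₀ _ hEuu, sub_self]
  have hEmm' : Ee m m' = Ee m' m' := by
    have h3 : Ee m' m' = Ee m' m - (Ee u m / Ee u u) * Ee m' u := by
      rw [hm', Ee_sub_smul]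
    have h4 : Ee m' u = Ee u m' := Ee_comm _ _
    rw [h3, h4, hEum', Ee_comm m m', mul_zero, sub_zero]
  have hEm'm' : Ee m' m' ≠ 0 := fun h => hm'0 (Ee_self_eq_zero h)
  set a : ℝ := 1 / (2 * Ee u u) with ha
  set b : ℝ := (1 - 2 * a * Ee u m) / (2 * Ee m' m') with hb
  set z₀ : Fin (p+q) → ℝ := fun i => sw p q i * (a * u i + b * m' i) with hz₀
  have hpu : QuadraticMap.polar (Qpq p q) u z₀ = 1 := by
    rw [hz₀, polar_dual, hEum']
    rw [ha]
    field_simp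
    ring
  have hpm : QuadraticMap.polar (Qpq p q) m z₀ = 1 := by
    rw [hz₀, polar_dual, Ee_comm m u, hEmm']
    rw [hb]
    field_simp
    ring
  set r : ℝ := 1 - Qpq p q z₀ with hr
  refine ⟨z₀ + r • u, ?_, ?_, ?_⟩
  · rw [Qpq_add, QuadraticMap.map_smul, hQu, QuadraticMap.polar_smul_right,
      QuadraticMap.polar_comm, hpu]
    simp [hr]
  · rw [QuadraticMap.polar_add_right, QuadraticMap.polar_smul_right, hpu,
      QuadraticMap.polar_self, hQu]
    simp
  · rw [QuadraticMap.polar_add_right, QuadraticMap.polar_smul_right, hpm,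
      QuadraticMap.polar_comm (Qpq p q : (Fin (p+q) → ℝ) → ℝ) m u, hpol]
    simp

end S13

namespace S13

variable {p q : ℕ}

local notation "jj" => ι (Qpq p q)
local notation "alg" => algebraMap ℝ (Cl p q)

lemma abstract4 {A : Type*} [Ring A] [Algebra ℝ A] (Z U R : A)
    (hZ : Z * Z = 1) (hU : U * U = 0) (hR : R * R = 0)
    (hZU : Z * U + U * Z = 1) (hZR : Z * R + R * Z = 0) (hUR : U * R + R * U = 0) :
    (Z + R) * Z * ((Z + U) * ((1/2 : ℝ) • (Z + U) + R)) = 1 + U * R := by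
  have hRZ : R * Z = -(Z * R) := eq_neg_of_add_eq_zero_right hZR
  have hRU : R * U = -(U * R) := eq_neg_of_add_eq_zero_right hUR
  have hZU' : Z * U = 1 - U * Z := eq_sub_of_add_eq hZU
  have e1 : (Z + R) * Z = 1 + R * Z := by rw [add_mul, hZ]
  have hsq : (Z + U) * (Z + U) = (2 : A) := by
    have h : (Z + U) * (Z + U) = Z * Z + (Z * U + U * Z) + U * U := by noncomm_ring
    rw [h, hZ, hU, hZU]; norm_num
  have htwo : (1/2 : ℝ) • (2 : A) = 1 := by
    rw [show (2 : A) = ((2:ℝ) • (1 : A)) by rw [two_smul]; norm_num, smul_smul]; norm_num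
  have e2 : (Z + U) * ((1/2 : ℝ) • (Z + U) + R) = 1 + (Z * R + U * R) := by
    rw [mul_add, mul_smul_comm, hsq, htwo, add_mul]
  have t1 : R * Z * (Z * R) = 0 := by
    calc R * Z * (Z * R) = R * (Z * Z) * R := by noncomm_ring
    _ = R * R := by rw [hZ]; noncomm_ring
    _ = 0 := hR
  have t2 : R * Z * (U * R) = 0 := by
    calc R * Z * (U * R) = R * (Z * U) * R := by noncomm_ring
    _ = R * (1 - U * Z) * R := by rw [hZU']
    _ = R * R - (R * U) * (Z * R) := by noncomm_ring
    _ = R * R - (-(U * R)) * (Z * R) := by rw [hRU]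
    _ = R * R + U * (R * Z) * R := by noncomm_ring
    _ = R * R + U * (-(Z * R)) * R := by rw [hRZ]
    _ = R * R - U * Z * (R * R) := by noncomm_ring
    _ = 0 := by rw [hR]; noncomm_ring
  rw [e1, e2]
  calc (1 + R * Z) * (1 + (Z * R + U * R))
      = 1 + (Z * R + R * Z) + U * R + (R * Z * (Z * R) + R * Z * (U * R)) := by noncomm_ring
  _ = 1 + U * R := by rw [hZR, t1, t2]; abel

lemma smul_alg (c r : ℝ) : c • (alg r) = alg (c * r) := by
  rw [Algebra.smul_def, ← map_mul]

/-- The element 1 - u·m is always a product of vectors. -/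
lemma one_sub_mem (u m : Fin (p+q) → ℝ) :
    ∃ l : List (Fin (p+q) → ℝ), (1 : Cl p q) - jj u * jj m = P l := by
  by_cases hQu : Qpq p q u ≠ 0
  · refine ⟨[u, (Qpq p q u)⁻¹ • u - m], ?_⟩
    rw [P_cons, P_cons, P_nil, mul_one, map_sub, map_smul, mul_sub, mul_smul_comm,
      ι_sq_scalar, smul_alg, inv_mul_cancel₀ hQu, map_one]
  push_neg at hQu
  by_cases hQm : Qpq p q m ≠ 0
  · refine ⟨[u - (Qpq p q m)⁻¹ • m, -m], ?_⟩
    rw [P_cons, P_cons, P_nil, mul_one, map_sub, map_smul, map_neg, sub_mul, mul_neg,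
      mul_neg, smul_mul_assoc, ι_sq_scalar, smul_alg,
      inv_mul_cancel₀ hQm, map_one]
    abel
  push_neg at hQm
  set pol : ℝ := QuadraticMap.polar (Qpq p q) u m with hpoldef
  by_cases hpol : pol ≠ 0
  · refine ⟨[(pol⁻¹ - 1) • u + m, pol⁻¹ • u + m], ?_⟩
    rw [P_cons, P_cons, P_nil, mul_one, map_add, map_add, map_smul, map_smul]
    have hMU : jj m * jj u = alg pol - jj u * jj m := by
      rw [ι_mul_ι_comm, QuadraticMap.polar_comm]
    have hUU : jj u * jj u = 0 := by rw [ι_sq_scalar, hQu, map_zero]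
    have hMM : jj m * jj m = 0 := by rw [ι_sq_scalar, hQm, map_zero]
    calc (1 : Cl p q) - jj u * jj m
        = (pol⁻¹ - 1) • pol⁻¹ • (jj u * jj u) + (pol⁻¹ - 1) • (jj u * jj m)
          + pol⁻¹ • (jj m * jj u) + jj m * jj m := by
          rw [hUU, hMU, hMM, smul_zero, smul_zero, smul_sub, smul_alg,
            inv_mul_cancel₀ hpol, map_one]
          rw [sub_smul, one_smul]
          abel
    _ = ((pol⁻¹ - 1) • jj u + jj m) * (pol⁻¹ • jj u + jj m) := by
          simp only [add_mul, mul_add, smul_mul_assoc, mul_smul_comm, smul_smul, smul_add,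
            hUU, hMM, smul_zero, mul_zero, add_zero, zero_add]
          abel
  push_neg at hpol
  by_cases hdep : ∃ t : ℝ, m = t • u
  · obtain ⟨t, rfl⟩ := hdep
    refine ⟨[], ?_⟩
    rw [map_smul, mul_smul_comm, ι_sq_scalar, hQu, map_zero, smul_zero, sub_zero, P_nil]
  by_cases hdep2 : ∃ t : ℝ, u = t • m
  · obtain ⟨t, ht⟩ := hdep2
    refine ⟨[], ?_⟩
    rw [ht, map_smul, smul_mul_assoc, ι_sq_scalar, hQm, map_zero, smul_zero, sub_zero, P_nil]
  obtain ⟨z, hQz, hpu, hpm⟩ := exists_dual hQu hpol hdep hdep2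
  set r : Fin (p+q) → ℝ := u - m with hrdef
  have hQr : Qpq p q r = 0 := by rw [hrdef, Qpq_sub, hQu, hQm, ← hpoldef, hpol]; ring
  set Z : Cl p q := jj z with hZdef
  set U : Cl p q := jj u with hUdef
  set R : Cl p q := jj r with hRdef
  have hZ : Z * Z = 1 := by rw [hZdef, ι_sq_scalar, hQz, map_one]
  have hU : U * U = 0 := by rw [hUdef, ι_sq_scalar, hQu, map_zero]
  have hR : R * R = 0 := by rw [hRdef, ι_sq_scalar, hQr, map_zero]
  have hZU : Z * U + U * Z = 1 := by
    rw [hZdef, hUdef, ι_mul_ι_add_swap, QuadraticMap.polar_comm, hpu, map_one]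
  have hZR : Z * R + R * Z = 0 := by
    rw [hZdef, hRdef, ι_mul_ι_add_swap, hrdef,
      QuadraticMap.polar_comm (Qpq p q : (Fin (p+q) → ℝ) → ℝ) z (u - m),
      QuadraticMap.polar_sub_left, hpu, hpm, sub_self, map_zero]
  have hUR : U * R + R * U = 0 := by
    rw [hUdef, hRdef, ι_mul_ι_add_swap, hrdef, QuadraticMap.polar_sub_right,
      QuadraticMap.polar_self, hQu, ← hpoldef, hpol]
    simp
  have habs := abstract4 Z U R hZ hU hR hZU hZR hUR
  refine ⟨[z + r, z, z + u, (1/2 : ℝ) • (z + u) + r], ?_⟩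
  have hUM : U * jj m = -(U * R) := by
    have hm : jj m = U - R := by rw [hUdef, hRdef, ← map_sub, hrdef, sub_sub_cancel]
    rw [hm, mul_sub, hU, zero_sub]
  calc (1 : Cl p q) - jj u * jj m = 1 + U * R := by rw [hUdef] at hUM ⊢; rw [hUM]; abel
  _ = (Z + R) * Z * ((Z + U) * ((1/2 : ℝ) • (Z + U) + R)) := habs.symm
  _ = P [z + r, z, z + u, (1/2 : ℝ) • (z + u) + r] := by
      rw [P_cons, P_cons, P_cons, P_cons, P_nil, mul_one, map_add, map_add, map_add, map_smul,
        map_add, ← hZdef, ← hUdef, ← hRdef]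
      noncomm_ring

end S13

namespace S13

variable {p q : ℕ}

local notation "jj" => ι (Qpq p q)
local notation "alg" => algebraMap ℝ (Cl p q)

lemma reverse_clConj (x : Cl p q) : reverse (clConj x) = involute x := by
  rw [clConj, reverse_reverse]

lemma involute_clConj (x : Cl p q) : involute (clConj x) = reverse x := by
  rw [clConj, ← reverse_involute, involute_involute]

lemma clConj_reverse (x : Cl p q) : clConj (reverse x) = involute x := by
  rw [clConj, ← reverse_involute, reverse_reverse]

lemma rev_mul_invol (l : List (Fin (p+q) → ℝ)) :
    reverse (P l) * involute (P l) = alg (nu l) := by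
  have h : involute (clConj (P l) * P l) = reverse (P l) * involute (P l) := by
    rw [map_mul, involute_clConj]
  rw [← h, clConj_mul_P]
  simp

lemma invol_mul_rev (l : List (Fin (p+q) → ℝ)) :
    involute (P l) * reverse (P l) = alg (nu l) := by
  have h : involute (P l * clConj (P l)) = involute (P l) * reverse (P l) := by
    rw [map_mul, involute_clConj]
  rw [← h, P_mul_clConj]
  simp

lemma T_mul {x y : Cl p q} (hx : x ∈ Tset p q) (hy : y ∈ Tset p q) : x * y ∈ Tset p q := by
  obtain ⟨l, rfl⟩ := hx; obtain ⟨k, rfl⟩ := hy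
  exact ⟨l ++ k, (P_append l k).symm⟩

lemma smul_P_cons (r : ℝ) (v : Fin (p+q) → ℝ) (t : List (Fin (p+q) → ℝ)) :
    r • P (v :: t) = P ((r • v) :: t) := by
  rw [P_cons, P_cons, map_smul, smul_mul_assoc]

lemma alg_mem_T (h : ∃ v : Fin (p+q) → ℝ, Qpq p q v ≠ 0) (r : ℝ) : alg r ∈ Tset p q := by
  obtain ⟨v, hv⟩ := h
  refine ⟨[v, (r / Qpq p q v) • v], ?_⟩
  show alg r = P [v, (r / Qpq p q v) • v]
  rw [P_cons, P_cons, P_nil, mul_one, map_smul, mul_smul_comm, ι_sq_scalar, smul_alg,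
    div_mul_cancel₀ _ hv]

lemma nu_ne_imp {l : List (Fin (p+q) → ℝ)} (h0 : nu l ≠ 0) (h1 : nu l ≠ 1) :
    ∃ v : Fin (p+q) → ℝ, Qpq p q v ≠ 0 := by
  cases l with
  | nil => exact absurd rfl h1
  | cons v t =>
    refine ⟨v, fun hQ => h0 ?_⟩
    rw [nu_cons, hQ]
    ring

lemma norm_mul_vec (b : Cl p q) (x : Fin (p+q) → ℝ) :
    (b * jj x) * clConj (b * jj x) = alg (-(Qpq p q x)) * (b * clConj b) := by
  rw [clConj_mul, clConj_ι]
  calc b * jj x * (-jj x * clConj b) = b * (jj x * -jj x) * clConj b := by noncomm_ring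
  _ = b * (alg (-(Qpq p q x))) * clConj b := by
      rw [mul_neg, ι_sq_scalar, ← map_neg]
  _ = alg (-(Qpq p q x)) * (b * clConj b) := by
      rw [← Algebra.commutes (-(Qpq p q x)) b]; noncomm_ring

/-- conjugating a vector through an invertible product of vectors -/
lemma swap_vec (k : List (Fin (p+q) → ℝ)) (y : Fin (p+q) → ℝ) (σ : ℝ) (hσ : σ * σ = 1)
    (hc : nu k * (1 + Qpq p q y) = σ) (x : Fin (p+q) → ℝ) :
    ∃ x' : Fin (p+q) → ℝ, jj x * P k = P k * jj x' ∧ Qpq p q x' = Qpq p q x := by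
  set c : Cl p q := P k with hcdef
  set w : ℝ := σ * (1 + Qpq p q y) with hwdef
  have hwnu : w * nu k = 1 := by rw [hwdef]; linear_combination σ * hc + hσ
  have hcc : c * (w • clConj c) = 1 := by
    rw [mul_smul_comm, hcdef, P_mul_clConj, smul_alg, hwnu, map_one]
  have hcc2 : (w • clConj c) * c = 1 := by
    rw [smul_mul_assoc, hcdef, clConj_mul_P, smul_alg, hwnu, map_one]
  obtain ⟨y₀, hy₀⟩ := sandwich (k.map (fun v => -v)) x
  set η : ℝ := (-1 : ℝ) ^ k.length with hηdef
  have hη : η * η = 1 := by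
    rw [hηdef, ← pow_add, ← two_mul, pow_mul]; norm_num
  have hPl' : P (k.map (fun v => -v)) = η • c := by rw [P_map_neg, hηdef, hcdef]
  have h2 : η • (P ((k.map (fun v => -v)).reverse) * jj x * c) = jj y₀ := by
    rw [← mul_smul_comm, ← hPl', hy₀]
  have key : clConj c * jj x * c = jj (η • y₀) := by
    rw [hcdef, clConj_P]
    set X := P ((k.map (fun v => -v)).reverse) * jj x * P k with hX
    calc X = (η * η) • X := by rw [hη, one_smul]
    _ = η • (η • X) := by rw [smul_smul]
    _ = η • jj y₀ := by rw [hX, ← hcdef, h2]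
    _ = jj (η • y₀) := (map_smul _ η y₀).symm
  set x' : Fin (p+q) → ℝ := w • (η • y₀) with hx'def
  have hx'c : jj x' = (w • clConj c) * jj x * c := by
    rw [hx'def, map_smul, ← key, smul_mul_assoc, smul_mul_assoc]
  refine ⟨x', ?_, ?_⟩
  · rw [hx'c]
    calc jj x * c = 1 * (jj x * c) := by rw [one_mul]
    _ = (c * (w • clConj c)) * (jj x * c) := by rw [hcc]
    _ = c * (w • clConj c * jj x * c) := by noncomm_ring
  · apply alg_inj (p := p) (q := q)
    rw [← ι_sq_scalar (Qpq p q) x', ← ι_sq_scalar (Qpq p q) x]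
    rw [hx'c]
    calc w • clConj c * jj x * c * (w • clConj c * jj x * c)
        = w • clConj c * jj x * (c * (w • clConj c)) * (jj x * c) := by noncomm_ring
    _ = w • clConj c * jj x * 1 * (jj x * c) := by rw [hcc]
    _ = w • clConj c * (jj x * jj x) * c := by noncomm_ring
    _ = w • clConj c * alg (Qpq p q x) * c := by rw [ι_sq_scalar]
    _ = alg (Qpq p q x) * (w • clConj c * c) := by
        rw [← Algebra.commutes (Qpq p q x) (w • clConj c)]; noncomm_ring
    _ = jj x * jj x := by rw [hcc2, mul_one, ι_sq_scalar]

/-- Normal form extraction for Vahlen pairs -/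
lemma NFX {α β : Cl p q} {w₀ : Fin (p+q) → ℝ} {ε : ℝ}
    (hα : ∃ l : List (Fin (p+q) → ℝ), α = P l) (hβ : ∃ l : List (Fin (p+q) → ℝ), β = P l)
    (hw : α * reverse β = jj w₀)
    (hd : α * clConj α - β * clConj β = alg ε) (hε : ε * ε = 1) :
    ∃ (l : List (Fin (p+q) → ℝ)) (x : Fin (p+q) → ℝ) (σ : ℝ),
      nu l * (1 + Qpq p q x) = σ ∧
      ((σ = ε ∧ α = P l ∧ β = P l * jj x) ∨ (σ = -ε ∧ β = P l ∧ α = P l * jj x)) := by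
  obtain ⟨lα, hlα⟩ := hα
  obtain ⟨lβ, hlβ⟩ := hβ
  set s : ℝ := nu lα with hsdef
  set t : ℝ := nu lβ with htdef
  have hαc : α * clConj α = alg s := by rw [hlα, P_mul_clConj]
  have hβc : β * clConj β = alg t := by rw [hlβ, P_mul_clConj]
  have hst : s - t = ε := by
    apply alg_inj (p := p) (q := q)
    rw [map_sub, ← hαc, ← hβc, hd]
  by_cases hs : s = 0
  · -- β is invertible, α = β * jj x
    have ht : t = -ε := by rw [← hst, hs]; ring
    have htne : t ≠ 0 := by
      rw [ht]; intro h
      rw [show ε = 0 by linarith [neg_eq_zero.mp h]] at hε; norm_num at hε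
    have hβcc : clConj β * β = alg t := by rw [hlβ, clConj_mul_P]
    have hrevinv : reverse β * involute β = alg t := by rw [hlβ, rev_mul_invol]
    have hαeq : α = t⁻¹ • (jj w₀ * involute β) := by
      have h1 : α * (reverse β * involute β) = jj w₀ * involute β := by
        rw [← mul_assoc, hw]
      rw [hrevinv, ← Algebra.commutes t α, ← Algebra.smul_def] at h1
      rw [← h1, smul_smul, inv_mul_cancel₀ htne, one_smul]
    obtain ⟨y₀, hy₀⟩ := sandwich (lβ.map (fun v => -v)) w₀
    have hsand : clConj β * (jj w₀ * involute β) = jj y₀ := by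
      rw [hlβ, clConj_P, involute_P, ← mul_assoc, hy₀]
    have hcx : clConj β * α = jj (t⁻¹ • y₀) := by
      rw [hαeq, mul_smul_comm, hsand, map_smul]
    set x : Fin (p+q) → ℝ := t⁻¹ • (t⁻¹ • y₀) with hxdef
    have hβx : β * jj x = α := by
      rw [hxdef, map_smul, ← hcx, mul_smul_comm, ← mul_assoc, hβc, ← Algebra.smul_def,
        smul_smul, inv_mul_cancel₀ htne, one_smul]
    have hnorm : α * clConj α = alg (-(Qpq p q x)) * (β * clConj β) := by
      rw [← hβx]; exact norm_mul_vec β x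
    have hsx : s = -(Qpq p q x) * t := by
      apply alg_inj (p := p) (q := q)
      rw [← hαc, hnorm, hβc, ← map_mul]
    have hQx : Qpq p q x = 0 := by
      have h3 : -(Qpq p q x) * t = 0 := by rw [← hsx, hs]
      rcases mul_eq_zero.mp h3 with h | h
      · linarith [neg_eq_zero.mp h]
      · exact absurd h htne
    refine ⟨lβ, x, -ε, ?_, Or.inr ⟨rfl, hlβ, ?_⟩⟩
    · rw [← htdef, hQx, ht]; ring
    · rw [← hlβ]; exact hβx.symm
  · -- α invertible, β = α * jj x
    have hcαα : clConj α * α = alg s := by rw [hlα, clConj_mul_P]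
    have hrevβ : reverse β = s⁻¹ • (clConj α * jj w₀) := by
      have h1 : clConj α * (α * reverse β) = clConj α * jj w₀ := by rw [hw]
      rw [← mul_assoc, hcαα, ← Algebra.smul_def] at h1
      rw [← h1, smul_smul, inv_mul_cancel₀ hs, one_smul]
    have hβeq : β = s⁻¹ • (jj w₀ * involute α) := by
      calc β = reverse (reverse β) := (reverse_reverse β).symm
      _ = reverse (s⁻¹ • (clConj α * jj w₀)) := by rw [hrevβ]
      _ = s⁻¹ • (jj w₀ * involute α) := by
          rw [map_smul, reverse.map_mul, reverse_ι, reverse_clConj]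
    obtain ⟨y₀, hy₀⟩ := sandwich (lα.map (fun v => -v)) w₀
    have hsand : clConj α * (jj w₀ * involute α) = jj y₀ := by
      rw [hlα, clConj_P, involute_P, ← mul_assoc, hy₀]
    have hcx : clConj α * β = jj (s⁻¹ • y₀) := by
      rw [hβeq, mul_smul_comm, hsand, map_smul]
    set x : Fin (p+q) → ℝ := s⁻¹ • (s⁻¹ • y₀) with hxdef
    have hαx : α * jj x = β := by
      rw [hxdef, map_smul, ← hcx, mul_smul_comm, ← mul_assoc, hαc, ← Algebra.smul_def,
        smul_smul, inv_mul_cancel₀ hs, one_smul]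
    have hnorm : β * clConj β = alg (-(Qpq p q x)) * (α * clConj α) := by
      rw [← hαx]; exact norm_mul_vec α x
    have htx : t = -(Qpq p q x) * s := by
      apply alg_inj (p := p) (q := q)
      rw [← hβc, hnorm, hαc, ← map_mul]
    refine ⟨lα, x, ε, ?_, Or.inl ⟨rfl, hlα, ?_⟩⟩
    · rw [← hsdef, ← hst, htx]; ring
    · rw [← hlα]; exact hαx.symm

end S13

namespace S13

variable {p q : ℕ}

local notation "jj" => ι (Qpq p q)
local notation "alg" => algebraMap ℝ (Cl p q)

lemma clConj_sub (x y : Cl p q) : clConj (x - y) = clConj x - clConj y := by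
  simp [clConj, map_sub]

section Main

variable (n : List (Fin (p+q) → ℝ)) (u m : Fin (p+q) → ℝ)

lemma main_A_mem : ∃ l, P n * (1 - jj u * jj m) = P l := by
  obtain ⟨l₀, hl₀⟩ := one_sub_mem u m
  exact ⟨n ++ l₀, by rw [P_append, hl₀]⟩

lemma main_B_mem : P n * jj (u + m) = P (n ++ [u + m]) := by
  rw [P_append, P_cons, P_nil, mul_one]

lemma main_id1 : (1 - jj u * jj m) * jj (u + m)
    = jj ((1 - QuadraticMap.polar (Qpq p q) u m - Qpq p q m) • u + (1 + Qpq p q u) • m) := by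
  have hmum : jj u * jj m * jj u
      = QuadraticMap.polar (Qpq p q) u m • jj u - Qpq p q u • jj m := by
    rw [mul_assoc, ι_mul_ι_comm m u, QuadraticMap.polar_comm, mul_sub,
      ← Algebra.commutes (QuadraticMap.polar (Qpq p q) u m) (jj u), ← Algebra.smul_def,
      ← mul_assoc, ι_sq_scalar, ← Algebra.smul_def]
  have hmm : jj u * jj m * jj m = Qpq p q m • jj u := by
    rw [mul_assoc, ι_sq_scalar, ← Algebra.commutes (Qpq p q m) (jj u), ← Algebra.smul_def]
  simp only [map_add, map_smul, sub_mul, mul_add, one_mul]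
  rw [hmum, hmm, sub_smul, sub_smul, one_smul, add_smul, one_smul]
  abel

lemma main_id2 : jj (u + m) * (1 - jj m * jj u)
    = jj ((1 - QuadraticMap.polar (Qpq p q) u m - Qpq p q m) • u + (1 + Qpq p q u) • m) := by
  have h1 : jj u * (jj m * jj u)
      = QuadraticMap.polar (Qpq p q) u m • jj u - Qpq p q u • jj m := by
    rw [ι_mul_ι_comm m u, QuadraticMap.polar_comm, mul_sub,
      ← Algebra.commutes (QuadraticMap.polar (Qpq p q) u m) (jj u), ← Algebra.smul_def,
      ← mul_assoc, ι_sq_scalar, ← Algebra.smul_def]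
  have h2 : jj m * (jj m * jj u) = Qpq p q m • jj u := by
    rw [← mul_assoc, ι_sq_scalar, Algebra.smul_def]
  simp only [map_add, map_smul, add_mul, mul_sub, mul_one]
  rw [h1, h2, sub_smul, sub_smul, one_smul, add_smul, one_smul]
  abel

lemma main_vec1 : ∃ w, (P n * (1 - jj u * jj m)) * reverse (P n * jj (u + m)) = jj w := by
  obtain ⟨w, hw⟩ := sandwich' n
    ((1 - QuadraticMap.polar (Qpq p q) u m - Qpq p q m) • u + (1 + Qpq p q u) • m)
  refine ⟨w, ?_⟩
  rw [reverse.map_mul, reverse_ι]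
  calc P n * (1 - jj u * jj m) * (jj (u + m) * reverse (P n))
      = P n * ((1 - jj u * jj m) * jj (u + m)) * reverse (P n) := by noncomm_ring
  _ = P n * jj ((1 - QuadraticMap.polar (Qpq p q) u m - Qpq p q m) • u
        + (1 + Qpq p q u) • m) * reverse (P n) := by rw [main_id1]
  _ = jj w := by rw [reverse_P]; exact hw

lemma main_vec2 : ∃ w, (P n * jj (u + m)) * reverse (P n * (1 - jj u * jj m)) = jj w := by
  obtain ⟨w, hw⟩ := sandwich' n
    ((1 - QuadraticMap.polar (Qpq p q) u m - Qpq p q m) • u + (1 + Qpq p q u) • m)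
  refine ⟨w, ?_⟩
  have hrev : reverse ((1 : Cl p q) - jj u * jj m) = 1 - jj m * jj u := by
    rw [map_sub, reverse.map_mul, reverse_ι, reverse_ι]
    simp
  rw [reverse.map_mul, hrev]
  calc P n * jj (u + m) * ((1 - jj m * jj u) * reverse (P n))
      = P n * (jj (u + m) * (1 - jj m * jj u)) * reverse (P n) := by noncomm_ring
  _ = P n * jj ((1 - QuadraticMap.polar (Qpq p q) u m - Qpq p q m) • u
        + (1 + Qpq p q u) • m) * reverse (P n) := by rw [main_id2]
  _ = jj w := by rw [reverse_P]; exact hw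

lemma main_EclE : ((1 : Cl p q) - jj u * jj m) * clConj (1 - jj u * jj m)
    = alg (1 - QuadraticMap.polar (Qpq p q) u m + Qpq p q u * Qpq p q m) := by
  have hcl : clConj ((1 : Cl p q) - jj u * jj m) = 1 - jj m * jj u := by
    rw [clConj_sub, clConj_one, clConj_mul, clConj_ι, clConj_ι, neg_mul_neg]
  rw [hcl]
  have hswap : jj u * jj m + jj m * jj u = alg (QuadraticMap.polar (Qpq p q) u m) :=
    ι_mul_ι_add_swap u m
  have hq : (jj u * jj m) * (jj m * jj u) = alg (Qpq p q u * Qpq p q m) := by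
    calc (jj u * jj m) * (jj m * jj u) = jj u * (jj m * jj m) * jj u := by noncomm_ring
    _ = jj u * alg (Qpq p q m) * jj u := by rw [ι_sq_scalar]
    _ = alg (Qpq p q m) * (jj u * jj u) := by
        rw [← Algebra.commutes (Qpq p q m) (jj u)]; noncomm_ring
    _ = alg (Qpq p q m) * alg (Qpq p q u) := by rw [ι_sq_scalar]
    _ = alg (Qpq p q u * Qpq p q m) := by rw [← map_mul, mul_comm]
  calc ((1 : Cl p q) - jj u * jj m) * (1 - jj m * jj u)
      = 1 - (jj u * jj m + jj m * jj u) + (jj u * jj m) * (jj m * jj u) := by noncomm_ring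
  _ = 1 - alg (QuadraticMap.polar (Qpq p q) u m) + alg (Qpq p q u * Qpq p q m) := by
      rw [hswap, hq]
  _ = alg (1 - QuadraticMap.polar (Qpq p q) u m + Qpq p q u * Qpq p q m) := by
      rw [map_add, map_sub, map_one]

lemma main_det : (P n * (1 - jj u * jj m)) * clConj (P n * (1 - jj u * jj m))
    - (P n * jj (u + m)) * clConj (P n * jj (u + m))
    = alg (nu n * ((1 + Qpq p q u) * (1 + Qpq p q m))) := by
  have hA : (P n * (1 - jj u * jj m)) * clConj (P n * (1 - jj u * jj m))
      = alg ((1 - QuadraticMap.polar (Qpq p q) u m + Qpq p q u * Qpq p q m) * nu n) := by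
    rw [clConj_mul]
    calc P n * (1 - jj u * jj m) * (clConj (1 - jj u * jj m) * clConj (P n))
        = P n * ((1 - jj u * jj m) * clConj (1 - jj u * jj m)) * clConj (P n) := by
          noncomm_ring
    _ = P n * alg (1 - QuadraticMap.polar (Qpq p q) u m + Qpq p q u * Qpq p q m)
          * clConj (P n) := by rw [main_EclE]
    _ = alg (1 - QuadraticMap.polar (Qpq p q) u m + Qpq p q u * Qpq p q m)
          * (P n * clConj (P n)) := by
          rw [← Algebra.commutes (1 - QuadraticMap.polar (Qpq p q) u m
            + Qpq p q u * Qpq p q m) (P n)]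
          noncomm_ring
    _ = alg ((1 - QuadraticMap.polar (Qpq p q) u m + Qpq p q u * Qpq p q m) * nu n) := by
          rw [P_mul_clConj, ← map_mul]
  have hB : (P n * jj (u + m)) * clConj (P n * jj (u + m))
      = alg (-(Qpq p q (u + m)) * nu n) := by
    rw [norm_mul_vec, P_mul_clConj, ← map_mul]
  rw [hA, hB, ← map_sub]
  congr 1
  rw [Qpq_add]
  ring

end Main

end S13

namespace S13

variable {p q : ℕ}

local notation "jj" => ι (Qpq p q)
local notation "alg" => algebraMap ℝ (Cl p q)

section Entries

variable (l k : List (Fin (p+q) → ℝ)) (x x' y : Fin (p+q) → ℝ)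

lemma inv_c (k : List (Fin (p+q) → ℝ)) :
    involute (P k) = ((-1:ℝ) ^ k.length) • (P k : Cl p q) := by
  rw [involute_P, P_map_neg]

lemma entry1 (hswap : jj x * P k = P k * jj x') :
    (P l : Cl p q) * P k + (P l * jj x) * involute (P k * jj y)
      = P (l ++ k) * (1 - jj (((-1:ℝ) ^ k.length) • x') * jj y) := by
  have hswapz : ∀ z : Cl p q, jj x * (P k * z) = P k * (jj x' * z) := fun z => by
    rw [← mul_assoc, hswap, mul_assoc]
  rw [map_mul, involute_ι, inv_c, P_append, map_smul]
  simp only [mul_assoc, mul_sub, mul_add, sub_mul, add_mul, mul_one, one_mul, mul_neg, neg_mul,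
    smul_mul_assoc, mul_smul_comm, smul_neg, neg_smul, smul_smul]
  rw [hswapz (jj y)]
  module

lemma entry2 (hswap : jj x * P k = P k * jj x') :
    (P l : Cl p q) * (P k * jj y) + (P l * jj x) * involute (P k)
      = P (l ++ k) * jj (((-1:ℝ) ^ k.length) • x' + y) := by
  have hswapz : ∀ z : Cl p q, jj x * (P k * z) = P k * (jj x' * z) := fun z => by
    rw [← mul_assoc, hswap, mul_assoc]
  rw [inv_c, P_append, map_add, map_smul]
  simp only [mul_assoc, mul_sub, mul_add, sub_mul, add_mul, mul_one, one_mul, mul_neg, neg_mul,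
    smul_mul_assoc, mul_smul_comm, smul_neg, neg_smul, smul_smul]
  rw [hswap]
  all_goals module

lemma entry3 (hswap : jj x * P k = P k * jj x') :
    (P l * jj x) * (P k : Cl p q) + P l * involute (P k * jj y)
      = P (l ++ k.map (fun v => -v)) * jj (((-1:ℝ) ^ k.length) • x' + -y) := by
  have hη2 : ((-1:ℝ) ^ k.length) * ((-1:ℝ) ^ k.length) = 1 := by
    rw [← pow_add, ← two_mul, pow_mul]; norm_num
  rw [map_mul, involute_ι, inv_c, P_append, P_map_neg, map_add, map_neg, map_smul]
  simp only [mul_assoc, mul_sub, mul_add, sub_mul, add_mul, mul_one, one_mul, mul_neg, neg_mul,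
    smul_mul_assoc, mul_smul_comm, smul_neg, neg_smul, smul_smul]
  rw [hswap, hη2, one_smul]
  all_goals module

lemma entry4 (hswap : jj x * P k = P k * jj x') :
    (P l * jj x) * ((P k : Cl p q) * jj y) + P l * involute (P k)
      = P (l ++ k.map (fun v => -v)) * (1 - jj (((-1:ℝ) ^ k.length) • x') * jj (-y)) := by
  have hswapz : ∀ z : Cl p q, jj x * (P k * z) = P k * (jj x' * z) := fun z => by
    rw [← mul_assoc, hswap, mul_assoc]
  have hη2 : ((-1:ℝ) ^ k.length) * ((-1:ℝ) ^ k.length) = 1 := by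
    rw [← pow_add, ← two_mul, pow_mul]; norm_num
  rw [inv_c, P_append, P_map_neg, map_smul, map_neg]
  simp only [mul_assoc, mul_sub, mul_add, sub_mul, add_mul, mul_one, one_mul, mul_neg, neg_mul,
    smul_mul_assoc, mul_smul_comm, smul_neg, neg_smul, smul_smul]
  rw [hswapz (jj y), hη2, one_smul]
  all_goals module

end Entries

lemma prod_form (α β γ δ : Cl p q) :
    !![α, β; involute β, involute α] * !![γ, δ; involute δ, involute γ] =
      !![α * γ + β * involute δ, α * δ + β * involute γ;
         involute (α * δ + β * involute γ), involute (α * γ + β * involute δ)] := by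
  rw [Matrix.mul_fin_two]
  have h1 : involute (α * δ + β * involute γ) = involute β * γ + involute α * involute δ := by
    rw [map_add, map_mul, map_mul, involute_involute]; exact add_comm _ _
  have h2 : involute (α * γ + β * involute δ) = involute β * δ + involute α * involute γ := by
    rw [map_add, map_mul, map_mul, involute_involute]; exact add_comm _ _
  rw [h1, h2]

end S13

namespace S13

variable {p q : ℕ}

local notation "jj" => ι (Qpq p q)
local notation "alg" => algebraMap ℝ (Cl p q)

lemma InS_entries {M : Matrix (Fin 2) (Fin 2) (Cl p q)} (h : InS p q M) :
    ∃ (α β : Cl p q) (lα lβ : List (Fin (p+q) → ℝ)) (w₀ : Fin (p+q) → ℝ) (ε : ℝ),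
      α = P lα ∧ β = P lβ ∧ (α * reverse β = jj w₀) ∧ ε * ε = 1 ∧
      α * clConj α - β * clConj β = alg ε ∧ M = !![α, β; involute β, involute α] := by
  obtain ⟨α, β, hTα, hTβ, ⟨w₀, hw⟩, hd, hform⟩ := h
  obtain ⟨lα, hlα⟩ := hTα
  obtain ⟨lβ, hlβ⟩ := hTβ
  rcases hd with hd | hd
  · exact ⟨α, β, lα, lβ, w₀, 1, hlα, hlβ, hw, by norm_num, by rw [hd, map_one], hform⟩
  · exact ⟨α, β, lα, lβ, w₀, -1, hlα, hlβ, hw, by norm_num,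
      by rw [hd]; rw [map_neg, map_one], hform⟩

theorem closure (M N : Matrix (Fin 2) (Fin 2) (Cl p q)) (hM : InS p q M) (hN : InS p q N) :
    InS p q (M * N) := by
  obtain ⟨α, β, lα, lβ, w₀, ε, hlα, hlβ, hw, hε2, hd, hMform⟩ := InS_entries hM
  obtain ⟨γ, δ, lγ, lδ, w₁, ε', hlγ, hlδ, hw', hε'2, hd', hNform⟩ := InS_entries hN
  obtain ⟨l, x, σ, hσc, hbM⟩ := NFX ⟨lα, hlα⟩ ⟨lβ, hlβ⟩ hw hd hε2
  obtain ⟨k, y, τ, hτc, hbN⟩ := NFX ⟨lγ, hlγ⟩ ⟨lδ, hlδ⟩ hw' hd' hε'2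
  have hσ2 : σ * σ = 1 := by
    rcases hbM with ⟨h1, _⟩ | ⟨h1, _⟩ <;> rw [h1] <;> [exact hε2; skip]
    calc -ε * -ε = ε * ε := by ring
    _ = 1 := hε2
  have hτ2 : τ * τ = 1 := by
    rcases hbN with ⟨h1, _⟩ | ⟨h1, _⟩ <;> rw [h1] <;> [exact hε'2; skip]
    calc -ε' * -ε' = ε' * ε' := by ring
    _ = 1 := hε'2
  obtain ⟨x', hswap, hQx'⟩ := swap_vec k y τ hτ2 hτc x
  set η : ℝ := (-1:ℝ) ^ k.length with hηdef
  have hη2 : η * η = 1 := by rw [hηdef, ← pow_add, ← two_mul, pow_mul]; norm_num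
  have hQu₀ : Qpq p q (η • x') = Qpq p q x := by
    rw [QuadraticMap.map_smul, hη2, one_smul, hQx']
  have hστ : (σ * τ) * (σ * τ) = 1 := by linear_combination τ * τ * hσ2 + hτ2
  have hστd := mul_self_eq_one_iff.mp hστ
  rcases hbM with ⟨hσε, hα, hβ⟩ | ⟨hσε, hβ, hα⟩ <;>
    rcases hbN with ⟨hτε, hγ, hδ⟩ | ⟨hτε, hδ, hγ⟩
  · -- case LL : order (A,B), list l ++ k, u₀ = η•x', m₀ = y
    refine ⟨P (l ++ k) * (1 - jj (η • x') * jj y), P (l ++ k) * jj (η • x' + y),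
      ?_, ?_, ?_, ?_, ?_⟩
    · exact main_A_mem (l ++ k) (η • x') y
    · exact ⟨(l ++ k) ++ [η • x' + y], by rw [main_B_mem]; rfl⟩
    · exact main_vec1 (l ++ k) (η • x') y
    · have hdet := main_det (l ++ k) (η • x') y
      have hreal : nu (l ++ k) * ((1 + Qpq p q (η • x')) * (1 + Qpq p q y)) = σ * τ := by
        rw [nu_append, hQu₀, ← hσc, ← hτc]; ring
      rw [hdet, hreal]
      rcases hστd with h | h
      · left; rw [h, map_one]
      · right; rw [h, map_neg, map_one]
    · rw [hMform, hNform, hα, hβ, hγ, hδ, prod_form,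
        entry1 l k x x' y hswap, entry2 l k x x' y hswap]
  · -- case LR : order (B,A), list l ++ k
    refine ⟨P (l ++ k) * jj (η • x' + y), P (l ++ k) * (1 - jj (η • x') * jj y),
      ?_, ?_, ?_, ?_, ?_⟩
    · exact ⟨(l ++ k) ++ [η • x' + y], by rw [main_B_mem]; rfl⟩
    · exact main_A_mem (l ++ k) (η • x') y
    · exact main_vec2 (l ++ k) (η • x') y
    · have hdet := main_det (l ++ k) (η • x') y
      have hreal : nu (l ++ k) * ((1 + Qpq p q (η • x')) * (1 + Qpq p q y)) = σ * τ := by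
        rw [nu_append, hQu₀, ← hσc, ← hτc]; ring
      have hneg : P (l ++ k) * jj (η • x' + y) * clConj (P (l ++ k) * jj (η • x' + y))
          - P (l ++ k) * (1 - jj (η • x') * jj y) * clConj (P (l ++ k) * (1 - jj (η • x') * jj y))
          = alg (-(σ * τ)) := by
        rw [show alg (-(σ * τ)) = -(alg (σ * τ)) from map_neg _ _, ← hreal, ← hdet, neg_sub]
      rw [hneg]
      rcases hστd with h | h
      · right; rw [h]; rw [map_neg, map_one]
      · left; rw [h]; norm_num
    · rw [hMform, hNform, hα, hβ, hγ, hδ, prod_form,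
        entry1 l k x x' y hswap, entry2 l k x x' y hswap]
  · -- case RL : order (B,A), list l ++ k.map neg, m₀ = -y
    have hQm₀ : Qpq p q (-y) = Qpq p q y := Qpq_neg y
    refine ⟨P (l ++ k.map (fun v => -v)) * jj (η • x' + -y),
      P (l ++ k.map (fun v => -v)) * (1 - jj (η • x') * jj (-y)), ?_, ?_, ?_, ?_, ?_⟩
    · exact ⟨(l ++ k.map (fun v => -v)) ++ [η • x' + -y], by rw [main_B_mem]; rfl⟩
    · exact main_A_mem (l ++ k.map (fun v => -v)) (η • x') (-y)
    · exact main_vec2 (l ++ k.map (fun v => -v)) (η • x') (-y)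
    · have hdet := main_det (l ++ k.map (fun v => -v)) (η • x') (-y)
      have hreal : nu (l ++ k.map (fun v => -v))
          * ((1 + Qpq p q (η • x')) * (1 + Qpq p q (-y))) = σ * τ := by
        rw [nu_append, nu_map_neg, hQu₀, hQm₀, ← hσc, ← hτc]; ring
      have hneg : P (l ++ k.map (fun v => -v)) * jj (η • x' + -y)
            * clConj (P (l ++ k.map (fun v => -v)) * jj (η • x' + -y))
          - P (l ++ k.map (fun v => -v)) * (1 - jj (η • x') * jj (-y))
            * clConj (P (l ++ k.map (fun v => -v)) * (1 - jj (η • x') * jj (-y)))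
          = alg (-(σ * τ)) := by
        rw [show alg (-(σ * τ)) = -(alg (σ * τ)) from map_neg _ _, ← hreal, ← hdet, neg_sub]
      rw [hneg]
      rcases hστd with h | h
      · right; rw [h]; rw [map_neg, map_one]
      · left; rw [h]; norm_num
    · rw [hMform, hNform, hα, hβ, hγ, hδ, prod_form,
        entry3 l k x x' y hswap, entry4 l k x x' y hswap]
  · -- case RR : order (A,B), list l ++ k.map neg, m₀ = -y
    have hQm₀ : Qpq p q (-y) = Qpq p q y := Qpq_neg y
    refine ⟨P (l ++ k.map (fun v => -v)) * (1 - jj (η • x') * jj (-y)),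
      P (l ++ k.map (fun v => -v)) * jj (η • x' + -y), ?_, ?_, ?_, ?_, ?_⟩
    · exact main_A_mem (l ++ k.map (fun v => -v)) (η • x') (-y)
    · exact ⟨(l ++ k.map (fun v => -v)) ++ [η • x' + -y], by rw [main_B_mem]; rfl⟩
    · exact main_vec1 (l ++ k.map (fun v => -v)) (η • x') (-y)
    · have hdet := main_det (l ++ k.map (fun v => -v)) (η • x') (-y)
      have hreal : nu (l ++ k.map (fun v => -v))
          * ((1 + Qpq p q (η • x')) * (1 + Qpq p q (-y))) = σ * τ := by
        rw [nu_append, nu_map_neg, hQu₀, hQm₀, ← hσc, ← hτc]; ring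
      rw [hdet, hreal]
      rcases hστd with h | h
      · left; rw [h, map_one]
      · right; rw [h, map_neg, map_one]
    · rw [hMform, hNform, hα, hβ, hγ, hδ, prod_form,
        entry4 l k x x' y hswap, entry3 l k x x' y hswap]

end S13

namespace S13

variable {p q : ℕ}

local notation "jj" => ι (Qpq p q)
local notation "alg" => algebraMap ℝ (Cl p q)

theorem one_mem : InS p q (1 : Matrix (Fin 2) (Fin 2) (Cl p q)) := by
  refine ⟨1, 0, ⟨[], rfl⟩, ⟨[0], by simp⟩, ⟨0, by simp⟩, Or.inl (by simp), ?_⟩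
  rw [Matrix.one_fin_two, map_zero, map_one]

lemma smul_P_mem (r : ℝ) (l : List (Fin (p+q) → ℝ))
    (h : l ≠ [] ∨ (∃ v : Fin (p+q) → ℝ, Qpq p q v ≠ 0)) : r • (P l : Cl p q) ∈ Tset p q := by
  rcases l with _ | ⟨v, t⟩
  · rcases h with h | h
    · exact absurd rfl h
    · have h2 : r • (P ([] : List (Fin (p+q) → ℝ)) : Cl p q) = alg r := by
        rw [P_nil, ← Algebra.algebraMap_eq_smul_one]
      rw [h2]
      exact alg_mem_T h r
  · exact ⟨(r • v) :: t, smul_P_cons r v t⟩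

theorem inv_ex (M : Matrix (Fin 2) (Fin 2) (Cl p q)) (hM : InS p q M) :
    ∃ N, InS p q N ∧ M * N = 1 ∧ N * M = 1 := by
  obtain ⟨α, β, lα, lβ, w₀, ε, hlα, hlβ, hw, hε2, hd, hMform⟩ := InS_entries hM
  obtain ⟨l, x, σ, hσc, hbM⟩ := NFX ⟨lα, hlα⟩ ⟨lβ, hlβ⟩ hw hd hε2
  set s : ℝ := nu lα with hsdef
  set t : ℝ := nu lβ with htdef
  have hαc : α * clConj α = alg s := by rw [hlα, P_mul_clConj]
  have hcα : clConj α * α = alg s := by rw [hlα, clConj_mul_P]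
  have hβc : β * clConj β = alg t := by rw [hlβ, P_mul_clConj]
  have hcβ : clConj β * β = alg t := by rw [hlβ, clConj_mul_P]
  have hs_t : s - t = ε := by
    apply alg_inj (p := p) (q := q)
    rw [map_sub, ← hαc, ← hβc, hd]
  have hαir : involute α * reverse α = alg s := by rw [hlα, invol_mul_rev]
  have hαri : reverse α * involute α = alg s := by rw [hlα, rev_mul_invol]
  have hβir : involute β * reverse β = alg t := by rw [hlβ, invol_mul_rev]
  have hβri : reverse β * involute β = alg t := by rw [hlβ, rev_mul_invol]
  have hw2 : β * reverse α = jj w₀ := by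
    have h0 := congrArg (reverse (Q := Qpq p q)) hw
    rw [reverse.map_mul, reverse_reverse, reverse_ι] at h0
    exact h0
  have hw3 : involute β * clConj α = -(jj w₀) := by
    have h0 := congrArg (involute (Q := Qpq p q)) hw2
    rw [map_mul, involute_ι] at h0
    rw [← h0, clConj, reverse_involute]
  have hw4 : involute α * clConj β = -(jj w₀) := by
    have h0 := congrArg (involute (Q := Qpq p q)) hw
    rw [map_mul, involute_ι] at h0
    rw [← h0, clConj, reverse_involute]
  have hv : ∃ v₁ v₂ : Fin (p+q) → ℝ, clConj α * β = jj v₁ ∧ clConj β * α = jj v₂ := by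
    have hcase1 : ∀ c : List (Fin (p+q) → ℝ), ∀ z : Fin (p+q) → ℝ,
        clConj (P c) * (P c * jj z) = jj (nu c • z) := by
      intro c z
      rw [← mul_assoc, clConj_mul_P, map_smul, Algebra.smul_def]
    have hcase2 : ∀ c : List (Fin (p+q) → ℝ), ∀ z : Fin (p+q) → ℝ,
        clConj (P c * jj z) * P c = jj ((-(nu c)) • z) := by
      intro c z
      rw [clConj_mul, clConj_ι, map_smul, neg_smul]
      calc -jj z * clConj (P c) * P c = -(jj z * (clConj (P c) * P c)) := by noncomm_ring
      _ = -(jj z * alg (nu c)) := by rw [clConj_mul_P]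
      _ = -(nu c • jj z) := by
          rw [← Algebra.commutes (nu c) (jj z), ← Algebra.smul_def]
    rcases hbM with ⟨_, hα, hβ⟩ | ⟨_, hβ, hα⟩
    · exact ⟨nu l • x, (-(nu l)) • x, by rw [hα, hβ, hcase1], by rw [hβ, hα, hcase2]⟩
    · exact ⟨(-(nu l)) • x, nu l • x, by rw [hα, hβ, hcase2], by rw [hβ, hα, hcase1]⟩
  obtain ⟨v₁, v₂, hv1, hv2⟩ := hv
  have hv1' : reverse β * involute α = jj v₁ := by
    have h0 := congrArg (reverse (Q := Qpq p q)) hv1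
    rw [reverse.map_mul, reverse_clConj, reverse_ι] at h0
    exact h0
  have hv2' : reverse α * involute β = jj v₂ := by
    have h0 := congrArg (reverse (Q := Qpq p q)) hv2
    rw [reverse.map_mul, reverse_clConj, reverse_ι] at h0
    exact h0
  have hclT : clConj α = P ((lα.map (fun v => -v)).reverse) := by rw [hlα, clConj_P]
  have hrevT : reverse β = P lβ.reverse := by rw [hlβ, reverse_P]
  have hαN_mem : (ε • clConj α) ∈ Tset p q := by
    rcases mul_self_eq_one_iff.mp hε2 with hε1 | hε1
    · rw [hε1, one_smul, hclT]; exact ⟨_, rfl⟩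
    · rw [hclT]
      apply smul_P_mem
      rcases Classical.em (lα = []) with hnil | hnil
      · right
        have hs1 : s = 1 := by rw [hsdef, hnil, nu_nil]
        have ht2 : t = 2 := by rw [hε1] at hs_t; linarith
        exact nu_ne_imp (l := lβ) (by rw [← htdef, ht2]; norm_num)
          (by rw [← htdef, ht2]; norm_num)
      · left; simpa using hnil
  have hβN_mem : ((-ε) • reverse β) ∈ Tset p q := by
    rcases mul_self_eq_one_iff.mp hε2 with hε1 | hε1
    · rw [hrevT]
      apply smul_P_mem
      rcases Classical.em (lβ = []) with hnil | hnil
      · right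
        have ht1 : t = 1 := by rw [htdef, hnil, nu_nil]
        have hs2 : s = 2 := by rw [hε1] at hs_t; linarith
        exact nu_ne_imp (l := lα) (by rw [← hsdef, hs2]; norm_num)
          (by rw [← hsdef, hs2]; norm_num)
      · left; simpa using hnil
    · rw [hε1, neg_neg, one_smul, hrevT]; exact ⟨_, rfl⟩
  set αN : Cl p q := ε • clConj α with hαNdef
  set βN : Cl p q := (-ε) • reverse β with hβNdef
  have hinvβN : involute βN = (-ε) • clConj β := by
    rw [hβNdef, map_smul, clConj, reverse_involute]
  have hinvαN : involute αN = ε • reverse α := by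
    rw [hαNdef, map_smul, involute_clConj]
  have hclαN : clConj αN = ε • α := by rw [hαNdef, clConj_smul, clConj_clConj]
  have hclβN : clConj βN = (-ε) • involute β := by rw [hβNdef, clConj_smul, clConj_reverse]
  have hrevβN : reverse βN = (-ε) • β := by rw [hβNdef, map_smul, reverse_reverse]
  -- the conditions for N ∈ S
  have hvecN : IsVec (αN * reverse βN) := by
    rw [hαNdef, hrevβN, smul_mul_assoc, mul_smul_comm, hv1, smul_smul, ← map_smul]
    exact ⟨_, rfl⟩
  have hdN : αN * clConj αN - βN * clConj βN = alg ε := by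
    have h1 : αN * clConj αN = alg s := by
      rw [hclαN, hαNdef, smul_mul_assoc, mul_smul_comm, smul_smul, hcα, hε2, one_smul]
    have h2 : βN * clConj βN = alg t := by
      rw [hclβN, hβNdef, smul_mul_assoc, mul_smul_comm, smul_smul, hβri,
        show -ε * -ε = (1:ℝ) by linear_combination hε2, one_smul]
    rw [h1, h2, ← map_sub, hs_t]
  have hdN_or : αN * clConj αN - βN * clConj βN = 1 ∨ αN * clConj αN - βN * clConj βN = -1 := by
    rcases mul_self_eq_one_iff.mp hε2 with hε1 | hε1
    · left; rw [hdN, hε1, map_one]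
    · right; rw [hdN, hε1, map_neg, map_one]
  -- entries of M * N
  have e00 : α * αN + β * involute βN = 1 := by
    rw [hαNdef, hinvβN, mul_smul_comm, mul_smul_comm, hαc, hβc, smul_alg, smul_alg, ← map_add,
      show ε * s + -ε * t = 1 by linear_combination ε * hs_t + hε2, map_one]
  have e01 : α * βN + β * involute αN = 0 := by
    rw [hβNdef, hinvαN, mul_smul_comm, mul_smul_comm, hw, hw2]
    module
  -- entries of N * M
  have f00 : αN * α + βN * involute β = 1 := by
    rw [hαNdef, hβNdef, smul_mul_assoc, smul_mul_assoc, hcα, hβri,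
      smul_alg, smul_alg, ← map_add,
      show ε * s + -ε * t = 1 by linear_combination ε * hs_t + hε2, map_one]
  have f01 : αN * β + βN * involute α = 0 := by
    rw [hαNdef, hβNdef, smul_mul_assoc, smul_mul_assoc, hv1, hv1']
    module
  refine ⟨!![αN, βN; involute βN, involute αN],
    ⟨αN, βN, hαN_mem, hβN_mem, hvecN, hdN_or, rfl⟩, ?_, ?_⟩
  · rw [hMform, prod_form, e00, e01, map_zero, map_one, Matrix.one_fin_two]
  · rw [hMform, prod_form αN βN α β, f00, f01, map_zero, map_one, Matrix.one_fin_two]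

end S13


theorem stmt13 (p q : ℕ) :
    (∀ M N, InS p q M → InS p q N → InS p q (M * N)) ∧
    InS p q 1 ∧
    (∀ M, InS p q M → ∃ N, InS p q N ∧ M * N = 1 ∧ N * M = 1) :=
  ⟨fun M N hM hN => S13.closure M N hM hN, S13.one_mem, fun M hM => S13.inv_ex M hM⟩
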